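/- Let X be a reflexive initial space closed under dilations with sup_{0≤r<1}||f_r||_X ≲ ||f||_X, and T an intrinsic operator with Tf_r ∈ H_{v,0} for all f ∈ X, 0 ≤ r < 1. Then T : X → H_v is bounded if and only if T : X → H_{v,0} is bounded. -/

import Mathlib

open Metric Filter Topology

/-- The open unit disk in the complex plane. -/
def UnitDisk : Set ℂ := Metric.ball (0 : ℂ) 1

/-- The filter of `z` in the plane with `|z| → 1⁻`, used to express boundary limits. -/
noncomputable def bdryFilter : Filter ℂ := Filter.comap (fun z : ℂ => ‖z‖) (nhdsWithin 1 (Set.Iio 1))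

open NormedSpace

/-- Reflexivity: the closed ball is weakly compact. -/
lemma aux_weak_compact {X : Type*} [NormedAddCommGroup X] [NormedSpace ℂ X]
    (hrefl : Function.Surjective (NormedSpace.inclusionInDoubleDual ℂ X)) (R : ℝ) :
    IsCompact (toWeakSpace ℂ X '' Metric.closedBall (0 : X) R) := by
  set ι := NormedSpace.inclusionInDoubleDual ℂ X
  have hnorm : ∀ x : X, ‖ι x‖ = ‖x‖ := fun x =>
    (NormedSpace.inclusionInDoubleDualLi ℂ (E := X)).norm_map x
  have hinj : Function.Injective ι := fun a b hab => by
    have : ‖a - b‖ = 0 := by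
      rw [← hnorm, map_sub, hab, sub_self]; exact norm_zero (E := StrongDual ℂ (StrongDual ℂ X))
    rwa [norm_eq_zero, sub_eq_zero] at this
  let E : X ≃ StrongDual ℂ (StrongDual ℂ X) := Equiv.ofBijective ι ⟨hinj, hrefl⟩
  let g : WeakDual ℂ (StrongDual ℂ X) → WeakSpace ℂ X :=
    fun ξ => toWeakSpace ℂ X (E.symm (WeakDual.toStrongDual ξ))
  have hg : Continuous g := by
    apply WeakBilin.continuous_of_continuous_eval
    intro y
    have hkey : (fun ξ : WeakDual ℂ (StrongDual ℂ X) =>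
        (topDualPairing ℂ X).flip (g ξ) y) = fun ξ => ξ y := by
      funext ξ
      have h := E.apply_symm_apply (WeakDual.toStrongDual ξ)
      have : y (E.symm (WeakDual.toStrongDual ξ)) = ξ y := by
        conv_rhs => rw [show (ξ y : ℂ) = (WeakDual.toStrongDual ξ) y from rfl, ← h]
        rfl
      exact this
    rw [hkey]
    exact WeakDual.eval_continuous y
  have himg : toWeakSpace ℂ X '' Metric.closedBall (0 : X) R =
      g '' (WeakDual.toStrongDual ⁻¹' Metric.closedBall 0 R) := by
    ext x
    constructor
    · rintro ⟨a, ha, rfl⟩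
      refine ⟨WeakDual.toStrongDual.symm (E a), ?_, ?_⟩
      · simp only [Set.mem_preimage, LinearEquiv.apply_symm_apply,
          mem_closedBall_zero_iff]
        have : ‖E a‖ = ‖a‖ := hnorm a
        rw [mem_closedBall_zero_iff (E := StrongDual ℂ (StrongDual ℂ X)), this]
        exact mem_closedBall_zero_iff.mp ha
      · simp only [g, LinearEquiv.apply_symm_apply, Equiv.symm_apply_apply]
    · rintro ⟨ξ, hξ, rfl⟩
      refine ⟨E.symm (WeakDual.toStrongDual ξ), ?_, rfl⟩
      rw [mem_closedBall_zero_iff, ← hnorm]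
      have : ι (E.symm (WeakDual.toStrongDual ξ)) = WeakDual.toStrongDual ξ :=
        E.apply_symm_apply _
      rw [this]
      exact (mem_closedBall_zero_iff (E := StrongDual ℂ (StrongDual ℂ X))).mp hξ
  rw [himg]
  exact (WeakDual.isCompact_closedBall (𝕜 := ℂ) (E := StrongDual ℂ X) 0 R).image hg

/-- Hahn–Banach separation for a closed complex subspace. -/
lemma aux_sep {Hv : Type*} [NormedAddCommGroup Hv] [NormedSpace ℂ Hv]
    (M : Submodule ℂ Hv) (hM : IsClosed (M : Set Hv)) (x : Hv) (hx : x ∉ M) :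
    ∃ φ : Hv →L[ℂ] ℂ, (∀ y ∈ M, φ y = 0) ∧ φ x ≠ 0 := by
  obtain ⟨f, u, hfx, hf⟩ :=
    geometric_hahn_banach_point_closed ((M.restrictScalars ℝ).convex) hM hx
  have hf0 : ∀ y ∈ M, f y = 0 := by
    intro y hy
    by_contra hne
    have hmem : ((u - 1) / f y) • y ∈ M := (M.restrictScalars ℝ).smul_mem _ hy
    have := hf _ hmem
    rw [map_smul, smul_eq_mul, div_mul_cancel₀ _ hne] at this
    linarith
  have hu0 : u < 0 := by
    have := hf 0 M.zero_mem
    simpa using this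
  refine ⟨StrongDual.extendRCLike f, fun y hy => ?_, ?_⟩
  · rw [ContinuousLinearMap.extendTo𝕜'_apply, hf0 y hy,
      hf0 _ (M.smul_mem _ hy)]
    simp
  · rw [ContinuousLinearMap.extendTo𝕜'_apply]
    intro h0
    have hre := congrArg Complex.re h0
    simp [Complex.ext_iff] at hre
    linarith

section pieces

variable {X Hv : Type*}
    [NormedAddCommGroup X] [NormedSpace ℂ X]
    [NormedAddCommGroup Hv] [NormedSpace ℂ Hv]

-- eventual membership in the disk
lemma aux_ev : ∀ᶠ z in bdryFilter, z ∈ UnitDisk := by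
  have h : (fun z : ℂ => ‖z‖) ⁻¹' (Set.Iio 1) ∈ bdryFilter :=
    Filter.preimage_mem_comap self_mem_nhdsWithin
  filter_upwards [h] with z hz
  simpa [UnitDisk, Metric.mem_ball, dist_zero_right] using hz

-- locality of T
lemma aux_loc (T : (ℂ → ℂ) →ₗ[ℂ] (ℂ → ℂ))
    (hT_intr : ∀ (F : ℕ → (ℂ → ℂ)) (f : ℂ → ℂ),
      (∀ n, DifferentiableOn ℂ (F n) UnitDisk) → DifferentiableOn ℂ f UnitDisk →
      TendstoLocallyUniformlyOn F f atTop UnitDisk →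
      TendstoLocallyUniformlyOn (fun n => T (F n)) (T f) atTop UnitDisk)
    (F G : ℂ → ℂ) (hF : DifferentiableOn ℂ F UnitDisk) (hG : DifferentiableOn ℂ G UnitDisk)
    (hFG : ∀ z ∈ UnitDisk, F z = G z) : ∀ z ∈ UnitDisk, T F z = T G z := by
  intro z hz
  have h1 : TendstoLocallyUniformlyOn (fun _ : ℕ => F) G atTop UnitDisk := by
    intro u hu x hx
    refine ⟨UnitDisk, self_mem_nhdsWithin, ?_⟩
    filter_upwards with n y hy
    rw [hFG y hy]
    exact refl_mem_uniformity hu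
  have h2 := hT_intr (fun _ => F) G (fun _ => hF) hG h1
  have h3 := h2.tendsto_at hz
  exact tendsto_nhds_unique tendsto_const_nhds h3

-- point evaluations are bounded
lemma aux_delta (ιX : X →ₗ[ℂ] (ℂ → ℂ))
    (hX_ball : ∀ u : ℕ → X, (∀ n, ‖u n‖ ≤ 1) →
      ∃ (f : X) (σ : ℕ → ℕ), StrictMono σ ∧ ‖f‖ ≤ 1 ∧
        TendstoLocallyUniformlyOn (fun k => ιX (u (σ k))) (ιX f) atTop UnitDisk)
    (z : ℂ) (hz : z ∈ UnitDisk) : ∃ φ : X →L[ℂ] ℂ, ∀ x : X, φ x = ιX x z := by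
  have hbd : ∃ C : ℝ, ∀ x : X, ‖ιX x z‖ ≤ C * ‖x‖ := by
    by_contra hC
    push_neg at hC
    have hstep : ∀ n : ℕ, ∃ y : X, ‖y‖ ≤ 1 ∧ (n : ℝ) < ‖ιX y z‖ := by
      intro n
      obtain ⟨x, hx⟩ := hC (n : ℝ)
      have hxpos : 0 < ‖x‖ := by
        rcases (norm_nonneg x).lt_or_eq with h | h
        · exact h
        · exfalso
          have hx0 : x = 0 := by rwa [eq_comm, norm_eq_zero] at h
          rw [hx0] at hx
          simp at hx
      refine ⟨((‖x‖ : ℂ))⁻¹ • x, ?_, ?_⟩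
      · rw [norm_smul, norm_inv, Complex.norm_real, norm_norm,
          inv_mul_cancel₀ hxpos.ne']
      · rw [map_smul]
        have : (((‖x‖ : ℂ))⁻¹ • ιX x) z = ((‖x‖ : ℂ))⁻¹ * ιX x z := rfl
        rw [this, norm_mul, norm_inv, Complex.norm_real, norm_norm,
          inv_mul_eq_div, lt_div_iff₀ hxpos]
        linarith [hx]
    choose y hy1 hy2 using hstep
    obtain ⟨g, σ, hσ, _, hTLU⟩ := hX_ball y hy1
    have hptw := (hTLU.tendsto_at hz).norm
    have h1 : ∀ᶠ k in atTop, ‖ιX (y (σ k)) z‖ < ‖ιX g z‖ + 1 :=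
      hptw.eventually_lt_const (lt_add_one _)
    have h2 : ∀ᶠ k : ℕ in atTop, (‖ιX g z‖ + 1 : ℝ) ≤ (k : ℝ) :=
      tendsto_natCast_atTop_atTop.eventually_ge_atTop _
    obtain ⟨k, hk1, hk2⟩ := (h1.and h2).exists
    have hk3 : (k : ℝ) ≤ (σ k : ℝ) := Nat.cast_le.mpr hσ.le_apply
    have hk4 := hy2 (σ k)
    linarith
  obtain ⟨C, hC⟩ := hbd
  refine ⟨LinearMap.mkContinuousOfExistsBound
    { toFun := fun x => ιX x z,
      map_add' := fun a b => by show ιX (a+b) z = _; rw [map_add]; rfl,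
      map_smul' := fun c a => by show ιX (c • a) z = _; rw [map_smul]; rfl } ⟨C, hC⟩, fun x => rfl⟩

end pieces

/-- Let `X` be a reflexive initial space closed under dilations with
`sup_{0 ≤ r < 1} ‖f_r‖_X ≲ ‖f‖_X`, and `T` an intrinsic operator with `T f_r ∈ H_{v,0}`
for all `f ∈ X`, `0 ≤ r < 1`.  Then `T : X → H_v` is bounded iff `T : X → H_{v,0}` is
bounded. -/
theorem stmt_16 {X Hv : Type*}
    [NormedAddCommGroup X] [NormedSpace ℂ X] [CompleteSpace X]
    [NormedAddCommGroup Hv] [NormedSpace ℂ Hv] [CompleteSpace Hv]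
    (v : ℂ → ℝ)
    (hv_cont : ContinuousOn v UnitDisk)
    (hv_pos : ∀ z ∈ UnitDisk, 0 < v z)
    (hv_le1 : ∀ z ∈ UnitDisk, v z ≤ 1)
    (hv_rad : ∀ z ∈ UnitDisk, ∀ w ∈ UnitDisk, ‖z‖ = ‖w‖ → v z = v w)
    (hv_mono : ∀ z ∈ UnitDisk, ∀ w ∈ UnitDisk, ‖z‖ ≤ ‖w‖ → v w ≤ v z)
    (hv_lim : Tendsto v bdryFilter (nhds 0))
    (ιX : X →ₗ[ℂ] (ℂ → ℂ)) (hιX_inj : Function.Injective ιX)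
    (hιX_hol : ∀ f : X, DifferentiableOn ℂ (ιX f) UnitDisk)
    (hX_poly : ∀ q : Polynomial ℂ, ∃ f : X, ∀ z ∈ UnitDisk, ιX f z = q.eval z)
    (hX_ball : ∀ u : ℕ → X, (∀ n, ‖u n‖ ≤ 1) →
      ∃ (f : X) (σ : ℕ → ℕ), StrictMono σ ∧ ‖f‖ ≤ 1 ∧
        TendstoLocallyUniformlyOn (fun k => ιX (u (σ k))) (ιX f) atTop UnitDisk)
    (j : Hv →ₗ[ℂ] (ℂ → ℂ)) (hj_inj : Function.Injective j)
    (hj_hol : ∀ g : Hv, DifferentiableOn ℂ (j g) UnitDisk)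
    (hj_le : ∀ (g : Hv), ∀ z ∈ UnitDisk, v z * ‖j g z‖ ≤ ‖g‖)
    (hj_norm : ∀ (g : Hv) (C : ℝ), 0 ≤ C → (∀ z ∈ UnitDisk, v z * ‖j g z‖ ≤ C) → ‖g‖ ≤ C)
    (hj_surj : ∀ f : ℂ → ℂ, DifferentiableOn ℂ f UnitDisk →
      (∃ C : ℝ, ∀ z ∈ UnitDisk, v z * ‖f z‖ ≤ C) → ∃ g : Hv, ∀ z ∈ UnitDisk, j g z = f z)
    (K : ℂ → (Hv →L[ℂ] ℂ)) (hK : ∀ z ∈ UnitDisk, ∀ g : Hv, K z g = j g z)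
    (T : (ℂ → ℂ) →ₗ[ℂ] (ℂ → ℂ))
    (hT_hol : ∀ f : ℂ → ℂ, DifferentiableOn ℂ f UnitDisk →
      DifferentiableOn ℂ (T f) UnitDisk)
    (hT_intr : ∀ (F : ℕ → (ℂ → ℂ)) (f : ℂ → ℂ),
      (∀ n, DifferentiableOn ℂ (F n) UnitDisk) → DifferentiableOn ℂ f UnitDisk →
      TendstoLocallyUniformlyOn F f atTop UnitDisk →
      TendstoLocallyUniformlyOn (fun n => T (F n)) (T f) atTop UnitDisk)
    (hrefl : Function.Surjective (NormedSpace.inclusionInDoubleDual ℂ X))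
    (hdil : ∃ c : ℝ, 0 < c ∧ ∀ (f : X) (r : ℝ), 0 ≤ r → r < 1 →
      ∃ fr : X, (∀ z ∈ UnitDisk, ιX fr z = ιX f ((r : ℂ) * z)) ∧ ‖fr‖ ≤ c * ‖f‖)
    (hTr : ∀ (f : X) (r : ℝ), 0 ≤ r → r < 1 →
      Tendsto (fun z => v z * ‖T (fun w => ιX f ((r : ℂ) * w)) z‖) bdryFilter (nhds 0)) :
    (∃ S : X →L[ℂ] Hv, ∀ f : X, ∀ z ∈ UnitDisk, j (S f) z = T (ιX f) z) ↔
      (∃ S : X →L[ℂ] Hv, (∀ f : X, ∀ z ∈ UnitDisk, j (S f) z = T (ιX f) z) ∧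
        ∀ f : X, Tendsto (fun z => v z * ‖j (S f) z‖) bdryFilter (nhds 0)) := by
  constructor
  · rintro ⟨S, hS⟩
    -- the submodule H_{v,0}
    let M : Submodule ℂ Hv :=
      { carrier := {g | Tendsto (fun z => v z * ‖j g z‖) bdryFilter (nhds 0)}
        zero_mem' := by
          have : (fun z => v z * ‖j (0 : Hv) z‖) = fun _ => (0 : ℝ) := by
            funext z; rw [map_zero]; simp
          simpa [this] using tendsto_const_nhds
        add_mem' := by
          intro a b ha hb
          simp only [Set.mem_setOf_eq] at ha hb ⊢
          apply squeeze_zero' (f := fun z => v z * ‖j (a + b) z‖)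
            (g := fun z => v z * ‖j a z‖ + v z * ‖j b z‖)
          · filter_upwards [aux_ev] with z hz
            exact mul_nonneg (hv_pos z hz).le (norm_nonneg _)
          · filter_upwards [aux_ev] with z hz
            have h1 : j (a + b) z = j a z + j b z := by rw [map_add]; rfl
            rw [h1, ← mul_add]
            exact mul_le_mul_of_nonneg_left (norm_add_le _ _) (hv_pos z hz).le
          · simpa using ha.add hb
        smul_mem' := by
          intro c a ha
          simp only [Set.mem_setOf_eq] at ha ⊢
          have h1 : (fun z => v z * ‖j (c • a) z‖) =
              fun z => ‖c‖ * (v z * ‖j a z‖) := by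
            funext z
            have : j (c • a) z = c * j a z := by rw [map_smul]; rfl
            rw [this, norm_mul]; ring
          rw [h1]
          simpa using ha.const_mul ‖c‖ }
    have hMmem : ∀ g : Hv, g ∈ M ↔
        Tendsto (fun z => v z * ‖j g z‖) bdryFilter (nhds 0) := fun g => Iff.rfl
    -- M is closed
    have hMclosed : IsClosed (M : Set Hv) := by
      rw [← closure_subset_iff_isClosed]
      intro g hg
      rw [SetLike.mem_coe, hMmem]
      rw [Metric.tendsto_nhds]
      intro ε hε
      obtain ⟨h, hhM, hgh⟩ := Metric.mem_closure_iff.mp hg (ε / 2) (by linarith)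
      rw [SetLike.mem_coe, hMmem, Metric.tendsto_nhds] at hhM
      filter_upwards [aux_ev, hhM (ε / 2) (by linarith)] with z hz hhz
      rw [Real.dist_eq, sub_zero] at hhz ⊢
      have hnn : 0 ≤ v z * ‖j g z‖ := mul_nonneg (hv_pos z hz).le (norm_nonneg _)
      rw [abs_of_nonneg hnn]
      have habs : |v z * ‖j h z‖| = v z * ‖j h z‖ :=
        abs_of_nonneg (mul_nonneg (hv_pos z hz).le (norm_nonneg _))
      rw [habs] at hhz
      have hsplit : j g z = j (g - h) z + j h z := by
        have : j (g - h) z = j g z - j h z := by rw [map_sub]; rfl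
        rw [this]; ring
      have h1 : v z * ‖j g z‖ ≤ v z * ‖j (g - h) z‖ + v z * ‖j h z‖ := by
        rw [hsplit, ← mul_add]
        exact mul_le_mul_of_nonneg_left (norm_add_le _ _) (hv_pos z hz).le
      have h2 : v z * ‖j (g - h) z‖ ≤ ‖g - h‖ := hj_le _ z hz
      have h3 : ‖g - h‖ < ε / 2 := by rwa [dist_eq_norm] at hgh
      linarith
    refine ⟨S, hS, ?_⟩
    intro f
    obtain ⟨c, hc, hdil'⟩ := hdil
    -- the dilation sequence
    set r : ℕ → ℝ := fun n => 1 - 1 / ((n : ℝ) + 1) with hrdef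
    have hr0 : ∀ n, 0 ≤ r n := by
      intro n
      have h1 : 1 / ((n : ℝ) + 1) ≤ 1 := by
        rw [div_le_one (by positivity)]
        linarith [Nat.cast_nonneg (α := ℝ) n]
      simp only [r]; linarith
    have hr1 : ∀ n, r n < 1 := by
      intro n
      have : 0 < 1 / ((n : ℝ) + 1) := by positivity
      simp only [r]; linarith
    have hrlim : Tendsto r atTop (nhds 1) := by
      have := tendsto_one_div_add_atTop_nhds_zero_nat (𝕜 := ℝ)
      have h2 := tendsto_const_nhds (x := (1 : ℝ)) (f := atTop (α := ℕ)) |>.sub this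
      simpa [r, one_div] using h2
    choose u hu1 hu2 using fun n => hdil' f (r n) (hr0 n) (hr1 n)
    -- each dilate is differentiable
    have hdiff : ∀ n, DifferentiableOn ℂ (fun w => ιX f ((r n : ℂ) * w)) UnitDisk := by
      intro n
      apply DifferentiableOn.comp (hιX_hol f)
      · exact (differentiable_id.const_mul _).differentiableOn
      · intro w hw
        simp only [UnitDisk, Metric.mem_ball, dist_zero_right] at hw ⊢
        rw [norm_mul, Complex.norm_real, Real.norm_eq_abs, abs_of_nonneg (hr0 n)]
        calc r n * ‖w‖ ≤ 1 * ‖w‖ :=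
              mul_le_mul_of_nonneg_right (hr1 n).le (norm_nonneg _)
          _ = ‖w‖ := one_mul _
          _ < 1 := hw
    -- S (u n) lies in M
    have hSun : ∀ n, S (u n) ∈ M := by
      intro n
      rw [hMmem]
      have hGn := hTr f (r n) (hr0 n) (hr1 n)
      apply Tendsto.congr' _ hGn
      filter_upwards [aux_ev] with z hz
      have e1 : T (fun w => ιX f ((r n : ℂ) * w)) z = T (ιX (u n)) z :=
        (aux_loc T hT_intr _ _ (hdiff n) (hιX_hol (u n))
          (fun w hw => (hu1 n w hw).symm) z hz)
      rw [e1, ← hS (u n) z hz]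
    -- weak cluster point
    have hKcpt := aux_weak_compact hrefl (c * ‖f‖)
    let s : ℕ → WeakSpace ℂ X := fun n => toWeakSpace ℂ X (u n)
    have hmem : ∀ n, s n ∈ toWeakSpace ℂ X '' Metric.closedBall (0 : X) (c * ‖f‖) :=
      fun n => Set.mem_image_of_mem _ (mem_closedBall_zero_iff.mpr (hu2 n))
    have hle : Filter.map s atTop ≤
        Filter.principal (toWeakSpace ℂ X '' Metric.closedBall (0 : X) (c * ‖f‖)) := by
      rw [Filter.le_principal_iff]
      exact Filter.mem_map.mpr (Filter.Eventually.of_forall hmem)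
    obtain ⟨w', hw's, hw'⟩ := hKcpt.exists_clusterPt hle
    let w : X := (toWeakSpace ℂ X).symm w'
    have hww' : toWeakSpace ℂ X w = w' := (toWeakSpace ℂ X).apply_symm_apply w'
    -- generic cluster transfer
    have htrans : ∀ (φ : X →L[ℂ] ℂ) (L : ℂ),
        Tendsto (fun n => φ (u n)) atTop (nhds L) → φ w = L := by
      intro φ L hlim
      have hcont : Continuous fun x : WeakSpace ℂ X =>
          φ ((toWeakSpace ℂ X).symm x) := by
        have h := WeakBilin.eval_continuous ((topDualPairing ℂ X).flip) φ
        exact h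
      have hten : Tendsto (fun x : WeakSpace ℂ X => φ ((toWeakSpace ℂ X).symm x))
          (Filter.map s atTop) (Filter.map (fun n => φ (u n)) atTop) := by
        rw [Filter.Tendsto, Filter.map_map]
        apply Filter.map_mono
        exact le_rfl
      have hcl : ClusterPt (φ ((toWeakSpace ℂ X).symm w'))
          (Filter.map (fun n => φ (u n)) atTop) :=
        hw'.map hcont.continuousAt hten
      have : ClusterPt (φ w) (nhds L) := hcl.mono hlim
      exact eq_of_nhds_neBot this
    -- ιX w = ιX f on the disk
    have hwf : ∀ z ∈ UnitDisk, ιX w z = ιX f z := by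
      intro z hz
      obtain ⟨φ, hφ⟩ := aux_delta ιX hX_ball z hz
      have hUopen : IsOpen UnitDisk := Metric.isOpen_ball
      have hcontf : ContinuousAt (ιX f) z :=
        ((hιX_hol f).differentiableAt (hUopen.mem_nhds hz)).continuousAt
      have hrz : Tendsto (fun n => ((r n : ℝ) : ℂ) * z) atTop (nhds z) := by
        have h1 : Tendsto (fun n => ((r n : ℝ) : ℂ)) atTop (nhds (1 : ℂ)) :=
          (Complex.continuous_ofReal.tendsto 1).comp hrlim
        have h2 := h1.mul_const z
        simpa using h2
      have hlim : Tendsto (fun n => φ (u n)) atTop (nhds (ιX f z)) := by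
        apply Tendsto.congr (f₁ := fun n => ιX f ((r n : ℂ) * z))
        · intro n
          rw [hφ, hu1 n z hz]
        · exact hcontf.tendsto.comp hrz
      rw [← hφ w, htrans φ _ hlim]
    -- S w ∈ M
    have hSwM : S w ∈ M := by
      by_contra hSw
      obtain ⟨φ, hφ0, hφne⟩ := aux_sep M hMclosed (S w) hSw
      have hlim : Tendsto (fun n => (φ.comp S) (u n)) atTop (nhds (0 : ℂ)) := by
        have : (fun n => (φ.comp S) (u n)) = fun _ => (0 : ℂ) := by
          funext n
          exact hφ0 _ (hSun n)
        rw [this]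
        exact tendsto_const_nhds
      have := htrans (φ.comp S) 0 hlim
      exact hφne this
    -- conclude
    rw [hMmem] at hSwM
    apply Tendsto.congr' _ hSwM
    filter_upwards [aux_ev] with z hz
    have e1 : j (S w) z = T (ιX w) z := hS w z hz
    have e2 : T (ιX w) z = T (ιX f) z :=
      aux_loc T hT_intr _ _ (hιX_hol w) (hιX_hol f) hwf z hz
    have e3 : j (S f) z = T (ιX f) z := hS f z hz
    rw [e1, e2, ← e3]
  · rintro ⟨S, hS, _⟩
    exact ⟨S, hS⟩
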